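/- Let m ∈ ℕ, m ≥ 1. The set mℤ = {mk : k ∈ ℤ} is an (m,m)-limiting set for (ℤ, c₁); that is, every c₁-continuous f : ℤ → ℤ such that |f(a) − a| ≤ m for all a ∈ mℤ satisfies |f(x) − x| ≤ m for all x ∈ ℤ. -/

import Mathlib

/-- A function between digital images (graphs) is digitally continuous if adjacent
points map to equal or adjacent points. -/
def DigContinuous {V W : Type*} (G : SimpleGraph V) (H : SimpleGraph W) (f : V → W) : Prop :=
  ∀ x y : V, G.Adj x y → f x = f y ∨ H.Adj (f x) (f y)

/-- `f` restricted to `A` is an `m`-map: it moves each point of `A` a graph distance of at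
most `m`. -/
def IsMMapOn {V : Type*} (G : SimpleGraph V) (f : V → V) (A : Set V) (m : ℕ) : Prop :=
  ∀ a ∈ A, G.dist a (f a) ≤ m

/-- `A` is an `(m,n)`-limiting set for `(X,κ)`: every continuous self-map whose restriction
to `A` is an `m`-map is an `n`-map. -/
def IsLimiting {V : Type*} (G : SimpleGraph V) (A : Set V) (m n : ℕ) : Prop :=
  ∀ f : V → V, DigContinuous G G f → IsMMapOn G f A m → IsMMapOn G f Set.univ n

/-- `A` is a minimal `(m,n)`-limiting set: it is limiting and no proper subset is. -/
def IsMinimalLimiting {V : Type*} (G : SimpleGraph V) (A : Set V) (m n : ℕ) : Prop :=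
  IsLimiting G A m n ∧ ∀ B : Set V, B ⊂ A → ¬ IsLimiting G B m n

/-- `ℤ` with `c₁`-adjacency. -/
def intC1 : SimpleGraph ℤ where
  Adj x y := |x - y| = 1
  symm := by
    constructor
    intro x y h
    rwa [abs_sub_comm]
  loopless := by
    constructor
    intro x h
    simp at h


lemma lip_nat (f : ℤ → ℤ) (hf : DigContinuous intC1 intC1 f) :
    ∀ n : ℕ, ∀ x : ℤ, |f (x + n) - f x| ≤ (n : ℤ) := by
  intro n
  induction n with
  | zero => simp
  | succ n ih =>
    intro x
    have adj : intC1.Adj (x + n + 1) (x + n) := by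
      show |(x + n + 1) - (x + n)| = 1
      simp
    have hstep : |f (x + n + 1) - f (x + n)| ≤ 1 := by
      rcases hf (x + n + 1) (x + n) adj with h | h
      · simp [h]
      · exact le_of_eq h
    have : ((n : ℤ) + 1) = ((n + 1 : ℕ) : ℤ) := by push_cast; ring
    calc |f (x + (n + 1 : ℕ)) - f x| = |f (x + n + 1) - f x| := by
          congr 1; push_cast; ring_nf
      _ ≤ |f (x + n + 1) - f (x + n)| + |f (x + n) - f x| := abs_sub_le _ _ _
      _ ≤ 1 + (n : ℤ) := add_le_add hstep (ih x)
      _ = ((n + 1 : ℕ) : ℤ) := by push_cast; ring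

lemma lip_aux (f : ℤ → ℤ) (hf : DigContinuous intC1 intC1 f) :
    ∀ x y : ℤ, x ≤ y → |f y - f x| ≤ y - x := by
  intro x y hxy
  have h := lip_nat f hf (y - x).toNat x
  have ht : ((y - x).toNat : ℤ) = y - x := Int.toNat_of_nonneg (by omega)
  rw [ht] at h
  have : x + (y - x) = y := by ring
  rwa [this] at h

theorem stmt17 (m : ℕ) (hm : 1 ≤ m) (f : ℤ → ℤ)
    (hf : DigContinuous intC1 intC1 f)
    (hA : ∀ a : ℤ, (m : ℤ) ∣ a → |f a - a| ≤ (m : ℤ)) :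
    ∀ x : ℤ, |f x - x| ≤ (m : ℤ) := by
  intro x
  have hm0 : (0:ℤ) < (m:ℤ) := by exact_mod_cast hm
  set a : ℤ := x - x % m with ha
  have hdvda : (m:ℤ) ∣ a := Int.dvd_self_sub_of_emod_eq rfl
  have h1 : a ≤ x := by
    have := Int.emod_nonneg x (ne_of_gt hm0)
    omega
  have h2 : x ≤ a + m := by
    have := Int.emod_lt_of_pos x hm0
    omega
  have hdvdb : (m:ℤ) ∣ a + m := dvd_add hdvda dvd_rfl
  have L1 := lip_aux f hf a x h1
  have L2 := lip_aux f hf x (a + m) h2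
  have HA := hA a hdvda
  have HB := hA (a + m) hdvdb
  rw [abs_le] at HA HB ⊢
  rw [abs_le] at L1 L2
  constructor <;> omega
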